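/- For real x → +∞, Γ(x) is asymptotic to x^{x-1/2} e^{-x} √(2π), i.e., the quotient Γ(x) / (x^{x-1/2} e^{-x} √(2π)) tends to 1 as x → +∞ (Stirling's formula). -/

import Mathlib

open Real Filter

noncomputable def sOf (n : ℕ) : ℝ := Stirling.stirlingSeq n / Real.sqrt Real.pi

lemma sOf_tendsto : Tendsto sOf atTop (nhds 1) := by
  have h : Real.sqrt Real.pi ≠ 0 := by positivity
  show Tendsto (fun n : ℕ => Stirling.stirlingSeq n / Real.sqrt Real.pi) atTop (nhds 1)
  simpa [sOf, div_self h] using Stirling.tendsto_stirlingSeq_sqrt_pi.div_const (Real.sqrt Real.pi)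

lemma factorial_eq (n : ℕ) (hn : 1 ≤ n) :
    (Nat.factorial n : ℝ) = sOf n * Real.sqrt (2 * Real.pi) *
      Real.exp (((n : ℝ) + 1/2) * Real.log n - n) := by
  have hn0 : (0:ℝ) < n := by exact_mod_cast hn
  have h1 : Real.sqrt (2 * (n:ℝ)) * ((n:ℝ) / Real.exp 1) ^ n ≠ 0 := by positivity
  have hs : (Nat.factorial n : ℝ) =
      Stirling.stirlingSeq n * (Real.sqrt (2 * (n:ℝ)) * ((n:ℝ) / Real.exp 1) ^ n) := by
    rw [Stirling.stirlingSeq, div_mul_cancel₀ _ h1]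
  rw [hs, sOf]
  have e1 : Real.sqrt (2 * (n:ℝ)) = Real.sqrt 2 * Real.exp (Real.log n / 2) := by
    rw [Real.sqrt_mul (by norm_num)]
    congr 1
    rw [show Real.sqrt (n:ℝ) = (n:ℝ) ^ (1/2 : ℝ) from Real.sqrt_eq_rpow _,
      Real.rpow_def_of_pos hn0]
    ring_nf
  have e2 : ((n:ℝ) / Real.exp 1) ^ n = Real.exp ((n:ℝ) * Real.log n - n) := by
    rw [← Real.exp_log (show (0:ℝ) < (n:ℝ)/Real.exp 1 by positivity), ← Real.exp_nat_mul,
      Real.log_div hn0.ne' (Real.exp_pos 1).ne', Real.log_exp]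
    ring_nf
  have e3 : Real.sqrt (2 * Real.pi) = Real.sqrt 2 * Real.sqrt Real.pi :=
    Real.sqrt_mul (by norm_num) _
  have hπ : Real.sqrt Real.pi ≠ 0 := by positivity
  rw [e1, e2, e3, mul_assoc (Real.sqrt 2), ← Real.exp_add,
    show Real.log n / 2 + ((n:ℝ) * Real.log n - n) = ((n:ℝ)+1/2)*Real.log n - n by ring]
  field_simp

lemma core_upper (N x : ℝ) (hN : 3 ≤ N) (h1 : N ≤ x) (h2 : x ≤ N + 1) :
    (x - N) - 2/N ≤ (x - 1/2) * (Real.log x - Real.log N) := by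
  have hN0 : (0:ℝ) < N := by linarith
  have hx0 : (0:ℝ) < x := by linarith
  have hlog : Real.log x - Real.log N = Real.log (x/N) := (Real.log_div hx0.ne' hN0.ne').symm
  have hlb : (x - N)/x ≤ Real.log (x/N) := by
    have h := Real.one_sub_inv_le_log_of_pos (show 0 < x/N by positivity)
    have e : (x/N)⁻¹ = N/x := by field_simp
    rw [e] at h
    have e2 : 1 - N/x = (x - N)/x := by field_simp
    linarith [e2 ▸ h]
  rw [hlog]
  have hx12 : (0:ℝ) ≤ x - 1/2 := by linarith
  have step : (x - 1/2) * ((x - N)/x) ≤ (x - 1/2) * Real.log (x/N) :=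
    mul_le_mul_of_nonneg_left hlb hx12
  have e1 : 2/N * N = 2 := div_mul_cancel₀ _ hN0.ne'
  have e2 : (x - N)/x * x = x - N := div_mul_cancel₀ _ hx0.ne'
  nlinarith [step, e1, e2, mul_pos hN0 hx0, sq_nonneg (x - N)]

lemma core_lower (N x : ℝ) (hN : 3 ≤ N) (h1 : N ≤ x) (h2 : x ≤ N + 1) :
    (x - 1/2) * (Real.log x - Real.log N) ≤ (x - N) + 1/N := by
  have hN0 : (0:ℝ) < N := by linarith
  have hx0 : (0:ℝ) < x := by linarith
  have hlog : Real.log x - Real.log N = Real.log (x/N) := (Real.log_div hx0.ne' hN0.ne').symm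
  have hub : Real.log (x/N) ≤ (x - N)/N := by
    have h := Real.log_le_sub_one_of_pos (show 0 < x/N by positivity)
    have e : x/N - 1 = (x - N)/N := by field_simp
    linarith [e ▸ h]
  rw [hlog]
  have hx12 : (0:ℝ) ≤ x - 1/2 := by linarith
  have step : (x - 1/2) * Real.log (x/N) ≤ (x - 1/2) * ((x - N)/N) :=
    mul_le_mul_of_nonneg_left hub hx12
  have e2 : (x - N)/N * N = x - N := div_mul_cancel₀ _ hN0.ne'
  have e1 : 1/N * N = 1 := div_mul_cancel₀ _ hN0.ne'
  nlinarith [step, e1, e2, sq_nonneg (x - N)]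

lemma Gamma_le (n : ℕ) (hn : 2 ≤ n) (x : ℝ) (h1 : (n:ℝ) ≤ x) (h2 : x ≤ (n:ℝ) + 1) :
    Real.Gamma x ≤ Real.Gamma n * Real.exp ((x - n) * Real.log n) := by
  have hn0 : (0:ℝ) < n := by positivity
  have hx0 : (0:ℝ) < x := by linarith
  set t : ℝ := x - n with ht
  have ht0 : 0 ≤ t := by linarith
  have ht1 : t ≤ 1 := by linarith
  have hc := Real.convexOn_log_Gamma.2 (Set.mem_Ioi.2 hn0)
    (Set.mem_Ioi.2 (show (0:ℝ) < (n:ℝ)+1 by linarith))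
    (show (0:ℝ) ≤ 1 - t by linarith) ht0 (by ring)
  have hcomb : (1 - t) • (n:ℝ) + t • ((n:ℝ)+1) = x := by
    simp only [smul_eq_mul]; ring
  rw [hcomb] at hc
  have hΓ1 : Real.Gamma ((n:ℝ)+1) = (n:ℝ) * Real.Gamma n :=
    Real.Gamma_add_one hn0.ne'
  have hΓnpos : 0 < Real.Gamma (n:ℝ) := Real.Gamma_pos_of_pos hn0
  have hΓxpos : 0 < Real.Gamma x := Real.Gamma_pos_of_pos hx0
  simp only [Function.comp_apply, smul_eq_mul] at hc
  rw [hΓ1, Real.log_mul hn0.ne' hΓnpos.ne'] at hc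
  have hlog : Real.log (Real.Gamma x) ≤ Real.log (Real.Gamma n) + t * Real.log n := by
    nlinarith [hc]
  calc Real.Gamma x = Real.exp (Real.log (Real.Gamma x)) := (Real.exp_log hΓxpos).symm
    _ ≤ Real.exp (Real.log (Real.Gamma n) + t * Real.log n) := Real.exp_le_exp.2 hlog
    _ = Real.Gamma n * Real.exp (t * Real.log n) := by
        rw [Real.exp_add, Real.exp_log hΓnpos]

lemma Gamma_ge (n : ℕ) (hn : 2 ≤ n) (x : ℝ) (h1 : (n:ℝ) ≤ x) (h2 : x ≤ (n:ℝ) + 1) :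
    Real.Gamma n * Real.exp ((x - n) * Real.log ((n:ℝ) - 1)) ≤ Real.Gamma x := by
  have hn0 : (0:ℝ) < n := by positivity
  have hn1 : (0:ℝ) < (n:ℝ) - 1 := by
    have : (2:ℝ) ≤ n := by exact_mod_cast hn
    linarith
  have hx0 : (0:ℝ) < x := by linarith
  set t : ℝ := x - n with ht
  have ht0 : 0 ≤ t := by linarith
  have ht1 : t ≤ 1 := by linarith
  have hdenom : (0:ℝ) < 1 + t := by linarith
  have hc := Real.convexOn_log_Gamma.2 (Set.mem_Ioi.2 hn1) (Set.mem_Ioi.2 hx0)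
    (show (0:ℝ) ≤ t/(1+t) by positivity)
    (show (0:ℝ) ≤ 1/(1+t) by positivity)
    (by field_simp; ring)
  have hcomb : (t/(1+t)) • ((n:ℝ) - 1) + (1/(1+t)) • x = (n:ℝ) := by
    simp only [smul_eq_mul]
    field_simp
    ring_nf
    linarith
  rw [hcomb] at hc
  simp only [Function.comp_apply, smul_eq_mul] at hc
  have hΓ1 : Real.Gamma (n:ℝ) = ((n:ℝ) - 1) * Real.Gamma ((n:ℝ) - 1) := by
    have := Real.Gamma_add_one hn1.ne'
    rw [sub_add_cancel] at this
    exact this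
  have hΓn1pos : 0 < Real.Gamma ((n:ℝ) - 1) := Real.Gamma_pos_of_pos hn1
  have hΓnpos : 0 < Real.Gamma (n:ℝ) := Real.Gamma_pos_of_pos hn0
  have hΓxpos : 0 < Real.Gamma x := Real.Gamma_pos_of_pos hx0
  have hlogΓn : Real.log (Real.Gamma (n:ℝ)) =
      Real.log ((n:ℝ) - 1) + Real.log (Real.Gamma ((n:ℝ) - 1)) := by
    rw [hΓ1, Real.log_mul hn1.ne' hΓn1pos.ne']
  have hlog : Real.log (Real.Gamma n) + t * Real.log ((n:ℝ) - 1)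
      ≤ Real.log (Real.Gamma x) := by
    have hc' : (1 + t) * Real.log (Real.Gamma (n:ℝ)) ≤
        t * Real.log (Real.Gamma ((n:ℝ) - 1)) + Real.log (Real.Gamma x) := by
      have := mul_le_mul_of_nonneg_left hc hdenom.le
      field_simp at this
      nlinarith [this]
    nlinarith [hc', hlogΓn]
  calc Real.Gamma (n:ℝ) * Real.exp (t * Real.log ((n:ℝ) - 1))
      = Real.exp (Real.log (Real.Gamma (n:ℝ)) + t * Real.log ((n:ℝ) - 1)) := by
        rw [Real.exp_add, Real.exp_log hΓnpos]
    _ ≤ Real.exp (Real.log (Real.Gamma x)) := Real.exp_le_exp.2 hlog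
    _ = Real.Gamma x := Real.exp_log hΓxpos

lemma sOf_pos (n : ℕ) (hn : 1 ≤ n) : 0 < sOf n := by
  obtain ⟨m, rfl⟩ := Nat.exists_eq_add_of_le hn
  have h1 := Stirling.stirlingSeq'_pos m
  rw [show 1 + m = m + 1 by ring]
  have : (0:ℝ) < Real.sqrt Real.pi := Real.sqrt_pos.2 Real.pi_pos
  exact div_pos h1 this

lemma Gamma_nat_eq (n : ℕ) (hn : 1 ≤ n) :
    Real.Gamma (n:ℝ) * (n:ℝ) = (Nat.factorial n : ℝ) := by
  obtain ⟨m, rfl⟩ := Nat.exists_eq_add_of_le hn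
  rw [show 1 + m = m + 1 from by ring]
  push_cast
  rw [Real.Gamma_nat_eq_factorial m]
  push_cast [Nat.factorial_succ]
  ring

lemma Gamma_nat_exp (n : ℕ) (hn : 3 ≤ n) :
    Real.Gamma (n:ℝ) = sOf n * Real.sqrt (2 * Real.pi) *
      Real.exp (((n:ℝ) - 1/2) * Real.log n - n) := by
  have hn0 : (0:ℝ) < n := by positivity
  apply mul_right_cancel₀ hn0.ne'
  rw [Gamma_nat_eq n (by omega), factorial_eq n (by omega),
    show ((n:ℝ) + 1/2) * Real.log n - n = (((n:ℝ) - 1/2) * Real.log n - n) + Real.log n by ring,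
    Real.exp_add, Real.exp_log hn0]
  ring

lemma upper_bound (x : ℝ) (hx : 3 ≤ x) :
    Real.Gamma x / (x ^ (x - 1/2) * Real.exp (-x) * Real.sqrt (2 * Real.pi))
      ≤ sOf ⌊x⌋₊ * Real.exp (2 / (⌊x⌋₊ : ℝ)) := by
  set n := ⌊x⌋₊ with hndef
  have hx0 : (0:ℝ) < x := by linarith
  have hn3 : 3 ≤ n := Nat.le_floor (by exact_mod_cast hx)
  have hN3 : (3:ℝ) ≤ n := by exact_mod_cast hn3
  have h1 : (n:ℝ) ≤ x := Nat.floor_le hx0.le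
  have h2 : x ≤ (n:ℝ) + 1 := (Nat.lt_floor_add_one x).le
  have hfpos : 0 < x ^ (x - 1/2) * Real.exp (-x) * Real.sqrt (2 * Real.pi) := by positivity
  rw [div_le_iff₀ hfpos]
  have hfx : x ^ (x - 1/2) * Real.exp (-x) * Real.sqrt (2 * Real.pi)
      = Real.sqrt (2 * Real.pi) * Real.exp ((x - 1/2) * Real.log x - x) := by
    rw [Real.rpow_def_of_pos hx0, ← Real.exp_add,
      show Real.log x * (x - 1/2) + -x = (x - 1/2) * Real.log x - x by ring]
    ring
  have hspos : 0 < sOf n := sOf_pos n (by omega)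
  calc Real.Gamma x ≤ Real.Gamma n * Real.exp ((x - n) * Real.log n) :=
        Gamma_le n (by omega) x h1 h2
    _ = sOf n * Real.sqrt (2 * Real.pi) * Real.exp ((x - 1/2) * Real.log n - n) := by
        rw [Gamma_nat_exp n hn3, mul_assoc, ← Real.exp_add,
          show ((n:ℝ) - 1/2) * Real.log n - n + (x - n) * Real.log n
            = (x - 1/2) * Real.log n - n by ring]
    _ ≤ sOf n * Real.sqrt (2 * Real.pi) * Real.exp (2/(n:ℝ) + ((x - 1/2) * Real.log x - x)) := by
        apply mul_le_mul_of_nonneg_left _ (by positivity)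
        rw [Real.exp_le_exp]
        have := core_upper n x hN3 h1 h2
        linarith
    _ = sOf n * Real.exp (2/(n:ℝ)) *
          (x ^ (x - 1/2) * Real.exp (-x) * Real.sqrt (2 * Real.pi)) := by
        rw [hfx, Real.exp_add]
        ring

lemma lower_bound (x : ℝ) (hx : 3 ≤ x) :
    sOf ⌊x⌋₊ * ((1 - 1/(⌊x⌋₊:ℝ)) * Real.exp (-(1/(⌊x⌋₊:ℝ))))
      ≤ Real.Gamma x / (x ^ (x - 1/2) * Real.exp (-x) * Real.sqrt (2 * Real.pi)) := by
  set n := ⌊x⌋₊ with hndef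
  have hx0 : (0:ℝ) < x := by linarith
  have hn3 : 3 ≤ n := Nat.le_floor (by exact_mod_cast hx)
  have hN3 : (3:ℝ) ≤ n := by exact_mod_cast hn3
  have hN0 : (0:ℝ) < n := by linarith
  have hN1 : (0:ℝ) < (n:ℝ) - 1 := by linarith
  have h1 : (n:ℝ) ≤ x := Nat.floor_le hx0.le
  have h2 : x ≤ (n:ℝ) + 1 := (Nat.lt_floor_add_one x).le
  have hfpos : 0 < x ^ (x - 1/2) * Real.exp (-x) * Real.sqrt (2 * Real.pi) := by positivity
  rw [le_div_iff₀ hfpos]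
  have hfx : x ^ (x - 1/2) * Real.exp (-x) * Real.sqrt (2 * Real.pi)
      = Real.sqrt (2 * Real.pi) * Real.exp ((x - 1/2) * Real.log x - x) := by
    rw [Real.rpow_def_of_pos hx0, ← Real.exp_add,
      show Real.log x * (x - 1/2) + -x = (x - 1/2) * Real.log x - x by ring]
    ring
  have hspos : 0 < sOf n := sOf_pos n (by omega)
  set L : ℝ := Real.log (((n:ℝ) - 1)/(n:ℝ)) with hLdef
  have hLlog : L = Real.log ((n:ℝ) - 1) - Real.log n := Real.log_div hN1.ne' hN0.ne'
  have hL0 : L ≤ 0 := by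
    apply Real.log_nonpos (by positivity)
    rw [div_le_one hN0]; linarith
  have h1n : 1 - 1/(n:ℝ) = Real.exp L := by
    rw [hLdef, Real.exp_log (by positivity)]
    field_simp
  calc sOf n * ((1 - 1/(n:ℝ)) * Real.exp (-(1/(n:ℝ)))) *
        (x ^ (x - 1/2) * Real.exp (-x) * Real.sqrt (2 * Real.pi))
      = sOf n * Real.sqrt (2 * Real.pi) *
          Real.exp (L + -(1/(n:ℝ)) + ((x - 1/2) * Real.log x - x)) := by
        rw [hfx, h1n, Real.exp_add, Real.exp_add]
        ring
    _ ≤ sOf n * Real.sqrt (2 * Real.pi) *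
          Real.exp (((x - 1/2) * Real.log n - n) + (x - n) * L) := by
        apply mul_le_mul_of_nonneg_left _ (by positivity)
        rw [Real.exp_le_exp]
        have hcl := core_lower n x hN3 h1 h2
        have ht1 : x - n ≤ 1 := by linarith
        nlinarith [mul_nonneg (show (0:ℝ) ≤ 1 - (x - n) by linarith) (neg_nonneg.2 hL0)]
    _ = Real.Gamma n * Real.exp ((x - n) * Real.log ((n:ℝ) - 1)) := by
        rw [show (x - 1/2) * Real.log n - (n:ℝ) + (x - n) * L
            = (((n:ℝ) - 1/2) * Real.log n - n) + (x - n) * Real.log ((n:ℝ) - 1) from by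
          rw [hLlog]; ring,
          Real.exp_add, Gamma_nat_exp n hn3]
        ring
    _ ≤ Real.Gamma x := Gamma_ge n (by omega) x h1 h2

lemma hi_tendsto :
    Tendsto (fun x : ℝ => sOf ⌊x⌋₊ * Real.exp (2 / (⌊x⌋₊ : ℝ))) atTop (nhds 1) := by
  have hseq : Tendsto (fun n : ℕ => sOf n * Real.exp (2 / (n : ℝ))) atTop (nhds 1) := by
    have h2 : Tendsto (fun n : ℕ => (2:ℝ) / n) atTop (nhds 0) :=
      tendsto_const_div_atTop_nhds_zero_nat 2
    have := sOf_tendsto.mul ((Real.continuous_exp.tendsto 0).comp h2)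
    simpa using this
  exact hseq.comp tendsto_nat_floor_atTop

lemma lo_tendsto :
    Tendsto (fun x : ℝ => sOf ⌊x⌋₊ * ((1 - 1/(⌊x⌋₊:ℝ)) * Real.exp (-(1/(⌊x⌋₊:ℝ)))))
      atTop (nhds 1) := by
  have h1 : Tendsto (fun n : ℕ => (1:ℝ) / n) atTop (nhds 0) :=
    tendsto_const_div_atTop_nhds_zero_nat 1
  have hseq : Tendsto (fun n : ℕ => sOf n * ((1 - 1/(n:ℝ)) * Real.exp (-(1/(n:ℝ)))))
      atTop (nhds 1) := by
    have ha : Tendsto (fun n : ℕ => 1 - (1:ℝ)/n) atTop (nhds 1) := by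
      simpa using (tendsto_const_nhds (x := (1:ℝ))).sub h1
    have hb : Tendsto (fun n : ℕ => Real.exp (-(1/(n:ℝ)))) atTop (nhds 1) := by
      have := (Real.continuous_exp.tendsto 0).comp (by simpa using h1.neg :
        Tendsto (fun n : ℕ => -(1/(n:ℝ))) atTop (nhds 0))
      simpa [Function.comp_def] using this
    have := sOf_tendsto.mul (ha.mul hb)
    simpa using this
  exact hseq.comp tendsto_nat_floor_atTop

/-- Stirling's formula: Γ(x) ~ x^{x-1/2} e^{-x} √(2π) as x → +∞. -/
theorem gamma_stirling :
    Filter.Tendsto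
      (fun x : ℝ => Real.Gamma x / (x ^ (x - 1/2) * Real.exp (-x) * Real.sqrt (2 * Real.pi)))
      Filter.atTop (nhds 1) := by
  apply tendsto_of_tendsto_of_tendsto_of_le_of_le' lo_tendsto hi_tendsto
  · filter_upwards [eventually_ge_atTop (3:ℝ)] with x hx using lower_bound x hx
  · filter_upwards [eventually_ge_atTop (3:ℝ)] with x hx using upper_bound x hx
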